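/- (Implicit duality theorem) Let S, P, Q be pairwise disjoint finite sets and let K_{SP}, K_{PQ} be generalized number lattices. Then (K_{SP} ↔ K_{PQ})^d = K_{SP}^d ⇌ K_{PQ}^d, where K ↔ K' is the matched composition { (f_S,g_Q) : ∃ h_P, (f_S,h_P) ∈ K_{SP}, (h_P,g_Q) ∈ K_{PQ} } and K ⇌ K' is the skewed composition { (f_S,g_Q) : ∃ h_P, (f_S,h_P) ∈ K_{SP}, (−h_P,g_Q) ∈ K_{PQ} }. -/

import Mathlib

open Finset Submodule

/-- Sum of pairs. -/
lemma IDaux.sum_mk {ι M N : Type*} [AddCommMonoid M] [AddCommMonoid N]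
    (s : Finset ι) (f : ι → M) (g : ι → N) :
    (∑ i ∈ s, (f i, g i)) = (∑ i ∈ s, f i, ∑ i ∈ s, g i) := by
  classical
  induction s using Finset.induction with
  | empty => simp; rfl
  | insert h ih => simp_all [Finset.sum_insert, Prod.mk_add_mk]

lemma IDaux.fst_sum {ι M N : Type*} [AddCommMonoid M] [AddCommMonoid N]
    (s : Finset ι) (f : ι → M × N) : (∑ i ∈ s, f i).1 = ∑ i ∈ s, (f i).1 :=
  map_sum (AddMonoidHom.fst M N) f s

lemma IDaux.snd_sum {ι M N : Type*} [AddCommMonoid M] [AddCommMonoid N]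
    (s : Finset ι) (f : ι → M × N) : (∑ i ∈ s, f i).2 = ∑ i ∈ s, (f i).2 :=
  map_sum (AddMonoidHom.snd M N) f s

/-- Extend a functional from a subspace. -/
lemma IDaux.ext_fun {E : Type*} [AddCommGroup E] [Module ℚ E] (p : Submodule ℚ E)
    (f : ↥p →ₗ[ℚ] ℚ) : ∃ g : E →ₗ[ℚ] ℚ, ∀ x : ↥p, g x = f x := by
  obtain ⟨g, hg⟩ := f.exists_extend
  exact ⟨g, fun x => by rw [← hg]; rfl⟩

/-- Glue: a functional agreeing with `f` on `V₁` and vanishing on `V₂`. -/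
lemma IDaux.glue {E : Type*} [AddCommGroup E] [Module ℚ E] (V₁ V₂ : Submodule ℚ E)
    (f : E →ₗ[ℚ] ℚ) (h : ∀ x ∈ V₁ ⊓ V₂, f x = 0) :
    ∃ g : E →ₗ[ℚ] ℚ, (∀ x ∈ V₁, g x = f x) ∧ ∀ x ∈ V₂, g x = 0 := by
  classical
  set T : ↥V₁ →ₗ[ℚ] E ⧸ V₂ := V₂.mkQ.comp V₁.subtype with hT
  have hker : LinearMap.ker T ≤ LinearMap.ker (f.comp V₁.subtype) := by
    intro x hx
    have hx2 : (x : E) ∈ V₂ := by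
      simpa [T, Submodule.Quotient.mk_eq_zero] using hx
    simpa using h x ⟨x.2, hx2⟩
  set χ₁ : (↥V₁ ⧸ LinearMap.ker T) →ₗ[ℚ] ℚ := (LinearMap.ker T).liftQ _ hker with hχ₁
  set χ₀ : ↥(LinearMap.range T) →ₗ[ℚ] ℚ := χ₁.comp T.quotKerEquivRange.symm.toLinearMap with hχ₀
  obtain ⟨χ, hχ⟩ := IDaux.ext_fun (LinearMap.range T) χ₀
  refine ⟨χ.comp V₂.mkQ, ?_, ?_⟩
  · intro x hx
    have h1 : V₂.mkQ x = T ⟨x, hx⟩ := rfl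
    have h2 : T.quotKerEquivRange (Submodule.Quotient.mk ⟨x, hx⟩)
        = ⟨T ⟨x, hx⟩, LinearMap.mem_range_self T _⟩ := by
      apply Subtype.ext
      exact T.quotKerEquivRange_apply_mk _
    have h3 : T.quotKerEquivRange.symm ⟨T ⟨x, hx⟩, LinearMap.mem_range_self T _⟩
        = Submodule.Quotient.mk ⟨x, hx⟩ := by
      rw [← h2, LinearEquiv.symm_apply_apply]
    calc χ (V₂.mkQ x) = χ₀ ⟨T ⟨x, hx⟩, LinearMap.mem_range_self T _⟩ := by
          rw [← hχ ⟨T ⟨x, hx⟩, LinearMap.mem_range_self T _⟩]; rw [h1]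
      _ = χ₁ (Submodule.Quotient.mk ⟨x, hx⟩) := by rw [hχ₀]; simp [h3]
      _ = f x := by rw [hχ₁, Submodule.liftQ_apply]; rfl
  · intro x hx
    have : V₂.mkQ x = 0 := by simpa [Submodule.Quotient.mk_eq_zero] using hx
    simp [this]

/-- Prescribe values on a `ℚ`-linearly independent family. -/
lemma IDaux.prescribe {F : Type*} [AddCommGroup F] [Module ℚ F] {ι : Type*} [Fintype ι]
    (d : ι → F) (hd : LinearIndependent ℚ d) (v : ι → ℚ) :
    ∃ χ : F →ₗ[ℚ] ℚ, ∀ i, χ (d i) = v i := by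
  classical
  set B : Module.Basis ι ℚ ↥(span ℚ (Set.range d)) := Module.Basis.span hd with hB
  obtain ⟨χ, hχ⟩ := IDaux.ext_fun (span ℚ (Set.range d)) (B.constr ℚ v)
  refine ⟨χ, fun i => ?_⟩
  have h1 : (B i : F) = d i := by rw [hB]; exact congrArg Subtype.val (Module.Basis.span_apply hd i)
  calc χ (d i) = χ (B i) := by rw [h1]
    _ = (B.constr ℚ v) (B i) := hχ _
    _ = v i := B.constr_basis ℚ v i

/-- Key extension lemma: a functional integral on the part of a generalized
number lattice lying in a subspace `V` can be modified outside `V` to be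
integral on the whole lattice. -/
lemma IDaux.ext_lemma {E : Type*} [AddCommGroup E] [Module ℚ E]
    {n k : ℕ} (b : Fin n → E) (c : Fin k → E)
    (V : Submodule ℚ E) (φ : E →ₗ[ℚ] ℚ)
    (hφ : ∀ (l : Fin n → ℤ) (m : Fin k → ℚ),
        ((∑ i, (l i : ℚ) • b i) + ∑ j, m j • c j) ∈ V →
        ∃ z : ℤ, φ ((∑ i, (l i : ℚ) • b i) + ∑ j, m j • c j) = z) :
    ∃ φ' : E →ₗ[ℚ] ℚ, (∀ x ∈ V, φ' x = φ x) ∧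
      ∀ (l : Fin n → ℤ) (m : Fin k → ℚ),
        ∃ z : ℤ, φ' ((∑ i, (l i : ℚ) • b i) + ∑ j, m j • c j) = z := by
  classical
  set W : Submodule ℚ E := span ℚ (Set.range c) with hW
  -- φ vanishes on V ⊓ W
  have hVW : ∀ x ∈ V ⊓ W, φ x = 0 := by
    rintro x ⟨hxV, hxW⟩
    by_contra hne
    obtain ⟨m, hm⟩ := (mem_span_range_iff_exists_fun ℚ).1 hxW
    have key : ∀ q : ℚ, ∃ z : ℤ, q * φ x = (z : ℚ) := by
      intro q
      have hrep : (∑ i, (((0 : Fin n → ℤ)) i : ℚ) • b i) + ∑ j, (q • m) j • c j = q • x := by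
        rw [← hm]
        simp [Finset.smul_sum, smul_smul]
      obtain ⟨z, hz⟩ := hφ 0 (q • m) (by rw [hrep]; exact V.smul_mem q hxV)
      refine ⟨z, ?_⟩
      rw [hrep] at hz
      simpa [smul_eq_mul] using hz
    obtain ⟨z, hz⟩ := key ((2 * φ x)⁻¹)
    have h2 : (2 * φ x)⁻¹ * φ x = 1/2 := by
      field_simp
    rw [h2] at hz
    have : (2 * z : ℚ) = 1 := by rw [← hz]; ring
    have : (2 * z : ℤ) = 1 := by exact_mod_cast this
    omega
  obtain ⟨φ₂, hφ₂V, hφ₂W⟩ := IDaux.glue V W φ hVW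
  set V₂ : Submodule ℚ E := V ⊔ W with hV₂
  have hφ₂V₂ : ∀ x ∈ V₂, ∃ v ∈ V, φ₂ x = φ₂ v ∧ x - v ∈ W := by
    intro x hx
    obtain ⟨v, hv, w, hw, rfl⟩ := Submodule.mem_sup.1 hx
    exact ⟨v, hv, by rw [map_add, hφ₂W w hw, add_zero], by simpa using hw⟩
  set L : Submodule ℤ E := span ℤ (Set.range b) with hL
  have hbL : ∀ (l : Fin n → ℤ), (∑ i, (l i : ℚ) • b i) ∈ L := by
    intro l
    refine Submodule.sum_mem _ fun i _ => ?_
    rw [Int.cast_smul_eq_zsmul]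
    exact Submodule.smul_mem _ _ (Submodule.subset_span ⟨i, rfl⟩)
  have hLrep : ∀ x ∈ L, ∃ l : Fin n → ℤ, (∑ i, (l i : ℚ) • b i) = x := by
    intro x hx
    obtain ⟨l, hl⟩ := (mem_span_range_iff_exists_fun ℤ).1 hx
    refine ⟨l, ?_⟩
    rw [← hl]
    exact Finset.sum_congr rfl fun i _ => Int.cast_smul_eq_zsmul ℚ (l i) (b i)
  -- integrality of φ₂ on L ∩ V₂
  have hφ₂int : ∀ x ∈ L, x ∈ V₂ → ∃ z : ℤ, φ₂ x = z := by
    intro x hxL hxV₂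
    obtain ⟨l, rfl⟩ := hLrep x hxL
    obtain ⟨v, hvV, hvφ, hvw⟩ := hφ₂V₂ _ hxV₂
    obtain ⟨m, hm⟩ := (mem_span_range_iff_exists_fun ℚ).1 hvw
    have hvrep : (∑ i, (l i : ℚ) • b i) + ∑ j, (-m) j • c j = v := by
      have : (∑ j, (-m) j • c j) = -∑ j, m j • c j := by
        simp [Finset.sum_neg_distrib, neg_smul]
      rw [this, hm]
      abel
    obtain ⟨z, hz⟩ := hφ l (-m) (by rw [hvrep]; exact hvV)
    rw [hvrep] at hz
    refine ⟨z, ?_⟩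
    rw [hvφ, hφ₂V v hvV]
    exact hz
  -- the quotient lattice
  set M : Submodule ℤ ↥L := (V₂.restrictScalars ℤ).comap L.subtype with hM
  haveI : Module.Finite ℤ ↥L := Module.Finite.span_of_finite ℤ (Set.finite_range b)
  haveI : NoZeroSMulDivisors ℤ (↥L ⧸ M) := by
    refine ⟨fun {z x} h => ?_⟩
    obtain ⟨y, rfl⟩ := M.mkQ_surjective x
    by_cases hz0 : z = 0
    · exact Or.inl hz0
    · right
      have h1 : z • y ∈ M := by
        have h0 : M.mkQ (z • y) = 0 := by rw [map_zsmul]; exact h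
        rwa [M.mkQ_apply, Submodule.Quotient.mk_eq_zero] at h0
      have h2 : ((z : ℚ)) • (y : E) ∈ V₂ := by
        have := Submodule.mem_comap.1 h1
        rw [Int.cast_smul_eq_zsmul]
        simpa using this
      have h3 : (y : E) ∈ V₂ := by
        have := V₂.smul_mem ((z : ℚ))⁻¹ h2
        rwa [inv_smul_smul₀ (by exact_mod_cast hz0)] at this
      rw [M.mkQ_apply, Submodule.Quotient.mk_eq_zero]
      exact Submodule.mem_comap.2 (by simpa using h3)
  obtain ⟨s, hs⟩ := Module.projective_lifting_property M.mkQ LinearMap.id M.mkQ_surjective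
  have hsec : ∀ q : ↥L ⧸ M, M.mkQ (s q) = q := fun q => by
    have := congrFun (congrArg DFunLike.coe hs) q
    simpa using this
  set ι := Module.Free.ChooseBasisIndex ℤ (↥L ⧸ M) with hι
  set B : Module.Basis ι ℤ (↥L ⧸ M) := Module.Free.chooseBasis ℤ (↥L ⧸ M) with hB
  set cE : ι → E := fun i => (s (B i) : E) with hcE
  set d : ι → E ⧸ V₂ := fun i => V₂.mkQ (cE i) with hd
  have hdZ : LinearIndependent ℤ d := by
    rw [Fintype.linearIndependent_iff]
    intro g hg
    have h1 : V₂.mkQ (∑ j, g j • cE j) = 0 := by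
      rw [map_sum]
      simpa [hd] using hg
    have h2 : (∑ j, g j • cE j) ∈ V₂ := by
      have := h1
      rwa [V₂.mkQ_apply, Submodule.Quotient.mk_eq_zero] at this
    have h3 : (∑ j, g j • cE j : E) = ((s (∑ j, g j • B j) : ↥L) : E) := by
      simp only [map_sum, map_zsmul, AddSubmonoidClass.coe_finset_sum, SetLike.val_smul, hcE]
    have h4 : s (∑ j, g j • B j) ∈ M := by
      rw [h3] at h2
      exact Submodule.mem_comap.2 (by simpa using h2)
    have h5 : (∑ j, g j • B j : ↥L ⧸ M) = 0 := by
      calc (∑ j, g j • B j : ↥L ⧸ M) = M.mkQ (s (∑ j, g j • B j)) := (hsec _).symm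
        _ = 0 := by rw [M.mkQ_apply]; exact (Submodule.Quotient.mk_eq_zero M).2 h4
    exact fun i => (Fintype.linearIndependent_iff.1 B.linearIndependent) g h5 i
  have hdQ : LinearIndependent ℚ d := (LinearIndependent.iff_fractionRing ℤ ℚ).1 hdZ
  obtain ⟨χ, hχ⟩ := IDaux.prescribe d hdQ (fun i => -φ₂ (cE i))
  set φ' : E →ₗ[ℚ] ℚ := φ₂ + χ.comp V₂.mkQ with hφ'
  have hφ'V₂ : ∀ x ∈ V₂, φ' x = φ₂ x := by
    intro x hx
    have : V₂.mkQ x = 0 := by rwa [V₂.mkQ_apply, Submodule.Quotient.mk_eq_zero]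
    simp [hφ', this]
  have hφ'c : ∀ i, φ' (cE i) = 0 := by
    intro i
    have h7 : χ (Submodule.Quotient.mk (cE i)) = -φ₂ (cE i) := hχ i
    simp [hφ', h7]
  refine ⟨φ', fun x hx => by
      rw [hφ'V₂ x (Submodule.mem_sup_left hx)]; exact hφ₂V x hx, ?_⟩
  intro l m
  have hxcW : (∑ j, m j • c j) ∈ W :=
    Submodule.sum_mem _ fun j _ => W.smul_mem _ (Submodule.subset_span ⟨j, rfl⟩)
  have hxcV₂ : (∑ j, m j • c j) ∈ V₂ := Submodule.mem_sup_right hxcW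
  set xL : ↥L := ⟨∑ i, (l i : ℚ) • b i, hbL l⟩ with hxL
  set q : ↥L ⧸ M := M.mkQ xL with hq
  have hmemM : xL - s q ∈ M := by
    have h0 : M.mkQ (xL - s q) = 0 := by rw [map_sub, hsec]; simp [hq]
    rwa [M.mkQ_apply, Submodule.Quotient.mk_eq_zero] at h0
  have hsq : ((s q : ↥L) : E) = ∑ i, (B.repr q i) • cE i := by
    conv_lhs => rw [← B.sum_repr q]
    simp only [map_sum, map_zsmul, AddSubmonoidClass.coe_finset_sum, SetLike.val_smul, hcE]
  have hsplit : (xL : E) = ((xL - s q : ↥L) : E) + ∑ i, (B.repr q i) • cE i := by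
    rw [← hsq]
    push_cast
    abel
  have hMV₂ : ((xL - s q : ↥L) : E) ∈ V₂ := by
    simpa using Submodule.mem_comap.1 hmemM
  have hML : ((xL - s q : ↥L) : E) ∈ L := (xL - s q).2
  obtain ⟨z, hz⟩ := hφ₂int _ hML hMV₂
  refine ⟨z, ?_⟩
  rw [map_add, hφ'V₂ _ hxcV₂, hφ₂W _ hxcW, add_zero]
  have : φ' (xL : E) = z := by
    rw [hsplit, map_add, map_sum]
    have h6 : ∀ i, φ' ((B.repr q i) • cE i) = 0 := by
      intro i
      rw [map_zsmul, hφ'c i, smul_zero]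
    rw [Finset.sum_congr rfl fun i _ => h6 i]
    rw [hφ'V₂ _ hMV₂, hz]
    simp
  exact this

noncomputable def IDaux.ip {A : Type*} [Fintype A] (f : A → ℚ) : (A → ℚ) →ₗ[ℚ] ℚ where
  toFun u := ∑ a, u a * f a
  map_add' u v := by simp [add_mul, Finset.sum_add_distrib]
  map_smul' q u := by simp [Finset.mul_sum, mul_assoc]

/-- A generalized number lattice. -/
def IsGenNumLat {M : Type*} [AddCommGroup M] [Module ℚ M] (K : Set M) : Prop :=
  ∃ (n k : ℕ) (b : Fin n → M) (c : Fin k → M),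
    K = {x | ∃ (l : Fin n → ℤ) (m : Fin k → ℚ),
      x = (∑ i, (l i : ℚ) • b i) + ∑ j, m j • c j}

/-- The dual of a collection of vectors on a disjoint union, represented as pairs. -/
def dualLat2 {A B : Type*} [Fintype A] [Fintype B]
    (K : Set ((A → ℚ) × (B → ℚ))) : Set ((A → ℚ) × (B → ℚ)) :=
  {g | ∀ f ∈ K, ∃ z : ℤ, (∑ a, f.1 a * g.1 a) + ∑ b, f.2 b * g.2 b = (z : ℚ)}

/-- Implicit duality theorem: the dual of the matched composition is the
skewed composition of the duals. -/
theorem stmt7 {S P Q : Type*} [Fintype S] [Fintype P] [Fintype Q]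
    (KSP : Set ((S → ℚ) × (P → ℚ))) (KPQ : Set ((P → ℚ) × (Q → ℚ)))
    (h1 : IsGenNumLat KSP) (h2 : IsGenNumLat KPQ) :
    dualLat2 {x : (S → ℚ) × (Q → ℚ) | ∃ h : P → ℚ, (x.1, h) ∈ KSP ∧ (h, x.2) ∈ KPQ} =
      {x : (S → ℚ) × (Q → ℚ) |
        ∃ h : P → ℚ, (x.1, h) ∈ dualLat2 KSP ∧ (-h, x.2) ∈ dualLat2 KPQ} := by
  classical
  obtain ⟨n1, k1, b1, c1, hK1⟩ := h1
  obtain ⟨n2, k2, b2, c2, hK2⟩ := h2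
  have h0PQ : ((0 : P → ℚ), (0 : Q → ℚ)) ∈ KPQ := by
    rw [hK2]; exact ⟨0, 0, by simp⟩
  have h0SP : ((0 : S → ℚ), (0 : P → ℚ)) ∈ KSP := by
    rw [hK1]; exact ⟨0, 0, by simp⟩
  ext x
  simp only [dualLat2, Set.mem_setOf_eq]
  constructor
  · intro hx
    set bb : Fin (n1 + n2) → ((S → ℚ) × (P → ℚ)) × ((P → ℚ) × (Q → ℚ)) :=
      Fin.append (fun i => (b1 i, 0)) (fun i => (0, b2 i)) with hbb
    set cc : Fin (k1 + k2) → ((S → ℚ) × (P → ℚ)) × ((P → ℚ) × (Q → ℚ)) :=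
      Fin.append (fun j => (c1 j, 0)) (fun j => (0, c2 j)) with hcc
    have hcomp : ∀ (l : Fin (n1 + n2) → ℤ) (m : Fin (k1 + k2) → ℚ),
        (∑ i, (l i : ℚ) • bb i) + ∑ j, m j • cc j
          = (((∑ i, (l (Fin.castAdd n2 i) : ℚ) • b1 i) + ∑ j, m (Fin.castAdd k2 j) • c1 j),
             ((∑ i, (l (Fin.natAdd n1 i) : ℚ) • b2 i) + ∑ j, m (Fin.natAdd k1 j) • c2 j)) := by
      intro l m
      refine Prod.ext ?_ ?_ <;>
        simp [Prod.fst_add, Prod.snd_add, IDaux.fst_sum, IDaux.snd_sum, Fin.sum_univ_add,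
          hbb, hcc, Fin.append_left, Fin.append_right]
    have hchar : ∀ y : ((S → ℚ) × (P → ℚ)) × ((P → ℚ) × (Q → ℚ)),
        (∃ (l : Fin (n1 + n2) → ℤ) (m : Fin (k1 + k2) → ℚ),
            y = (∑ i, (l i : ℚ) • bb i) + ∑ j, m j • cc j)
          ↔ (y.1 ∈ KSP ∧ y.2 ∈ KPQ) := by
      intro y
      constructor
      · rintro ⟨l, m, rfl⟩
        rw [hcomp l m]
        rw [hK1, hK2]
        exact ⟨⟨_, _, rfl⟩, ⟨_, _, rfl⟩⟩
      · rintro ⟨hy1, hy2⟩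
        rw [hK1] at hy1
        rw [hK2] at hy2
        obtain ⟨l1, m1, e1⟩ := hy1
        obtain ⟨l2, m2, e2⟩ := hy2
        refine ⟨Fin.append l1 l2, Fin.append m1 m2, ?_⟩
        rw [hcomp]
        simp only [Fin.append_left, Fin.append_right]
        rw [← e1, ← e2]
    set T : (((S → ℚ) × (P → ℚ)) × ((P → ℚ) × (Q → ℚ))) →ₗ[ℚ] (P → ℚ) :=
      (LinearMap.snd ℚ (S → ℚ) (P → ℚ)).comp
          (LinearMap.fst ℚ ((S → ℚ) × (P → ℚ)) ((P → ℚ) × (Q → ℚ)))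
        - (LinearMap.fst ℚ (P → ℚ) (Q → ℚ)).comp
          (LinearMap.snd ℚ ((S → ℚ) × (P → ℚ)) ((P → ℚ) × (Q → ℚ))) with hT
    have hTapp : ∀ y : ((S → ℚ) × (P → ℚ)) × ((P → ℚ) × (Q → ℚ)),
        T y = y.1.2 - y.2.1 := fun y => rfl
    set V := LinearMap.ker T with hV
    set φ₀ : (((S → ℚ) × (P → ℚ)) × ((P → ℚ) × (Q → ℚ))) →ₗ[ℚ] ℚ :=
      (IDaux.ip x.1).comp ((LinearMap.fst ℚ (S → ℚ) (P → ℚ)).comp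
          (LinearMap.fst ℚ ((S → ℚ) × (P → ℚ)) ((P → ℚ) × (Q → ℚ))))
        + (IDaux.ip x.2).comp ((LinearMap.snd ℚ (P → ℚ) (Q → ℚ)).comp
          (LinearMap.snd ℚ ((S → ℚ) × (P → ℚ)) ((P → ℚ) × (Q → ℚ)))) with hφ₀
    have hφ₀app : ∀ y : ((S → ℚ) × (P → ℚ)) × ((P → ℚ) × (Q → ℚ)),
        φ₀ y = (∑ a, y.1.1 a * x.1 a) + ∑ q, y.2.2 q * x.2 q := fun y => rfl
    have hyp : ∀ (l : Fin (n1 + n2) → ℤ) (m : Fin (k1 + k2) → ℚ),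
        ((∑ i, (l i : ℚ) • bb i) + ∑ j, m j • cc j) ∈ V →
        ∃ z : ℤ, φ₀ ((∑ i, (l i : ℚ) • bb i) + ∑ j, m j • cc j) = z := by
      intro l m hmem
      set y := (∑ i, (l i : ℚ) • bb i) + ∑ j, m j • cc j with hy
      have hy12 := (hchar y).1 ⟨l, m, rfl⟩
      have hker : T y = 0 := LinearMap.mem_ker.1 hmem
      have heq : y.1.2 = y.2.1 := by
        have := hker
        rw [hTapp] at this
        exact sub_eq_zero.1 this
      obtain ⟨z, hz⟩ := hx (y.1.1, y.2.2)
        ⟨y.1.2, by simpa using hy12.1, by rw [heq]; simpa using hy12.2⟩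
      exact ⟨z, by rw [hφ₀app]; exact hz⟩
    obtain ⟨φ', hφ'V, hφ'int⟩ := IDaux.ext_lemma bb cc V φ₀ hyp
    set ι₂ : (P → ℚ) →ₗ[ℚ] (((S → ℚ) × (P → ℚ)) × ((P → ℚ) × (Q → ℚ))) :=
      (LinearMap.inl ℚ ((S → ℚ) × (P → ℚ)) ((P → ℚ) × (Q → ℚ))).comp
        (LinearMap.inr ℚ (S → ℚ) (P → ℚ)) with hι₂
    set κ : (P → ℚ) →ₗ[ℚ] ℚ := (φ' - φ₀).comp ι₂ with hκ
    set h : P → ℚ := fun p => κ (fun j => if p = j then 1 else 0) with hh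
    have hκapp : ∀ v : P → ℚ, κ v = ∑ p, v p * h p := by
      intro v
      conv_lhs => rw [pi_eq_sum_univ v]
      rw [map_sum]
      exact Finset.sum_congr rfl fun p _ => by rw [map_smul, smul_eq_mul, hh]
    have hψy : ∀ y : ((S → ℚ) × (P → ℚ)) × ((P → ℚ) × (Q → ℚ)),
        φ' y - φ₀ y = ∑ p, (y.1.2 p - y.2.1 p) * h p := by
      intro y
      have hd : y = (((y.1.1, y.2.1), y.2)) + ι₂ (y.1.2 - y.2.1) := by
        have : ι₂ (y.1.2 - y.2.1) = ((0, y.1.2 - y.2.1), 0) := rfl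
        rw [this]
        refine Prod.ext ?_ ?_
        · refine Prod.ext ?_ ?_ <;> simp
        · simp
      have hmemV : ((((y.1.1, y.2.1), y.2)) :
          ((S → ℚ) × (P → ℚ)) × ((P → ℚ) × (Q → ℚ))) ∈ V := by
        rw [hV, LinearMap.mem_ker, hTapp]
        simp
      have e0 : φ' ((((y.1.1, y.2.1), y.2)) :
          ((S → ℚ) × (P → ℚ)) × ((P → ℚ) × (Q → ℚ)))
          = φ₀ (((y.1.1, y.2.1), y.2)) := hφ'V _ hmemV
      calc φ' y - φ₀ y = (φ' - φ₀) y := by simp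
        _ = (φ' - φ₀) (((y.1.1, y.2.1), y.2)) + (φ' - φ₀) (ι₂ (y.1.2 - y.2.1)) := by
            rw [← map_add, ← hd]
        _ = κ (y.1.2 - y.2.1) := by
            rw [hκ]
            simp [e0]
        _ = ∑ p, (y.1.2 p - y.2.1 p) * h p := by
            rw [hκapp]
            rfl
    refine ⟨h, ?_, ?_⟩
    · intro f hf
      obtain ⟨l, m, hrep⟩ := (hchar (f, (0, 0))).2 ⟨by simpa using hf, h0PQ⟩
      obtain ⟨z, hz⟩ := hφ'int l m
      rw [← hrep] at hz
      refine ⟨z, ?_⟩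
      have e2 : φ₀ ((f, (0, 0)) : ((S → ℚ) × (P → ℚ)) × ((P → ℚ) × (Q → ℚ)))
          = ∑ a, f.1 a * x.1 a := by
        rw [hφ₀app]
        simp
      have e3 : φ' ((f, (0, 0)) : ((S → ℚ) × (P → ℚ)) × ((P → ℚ) × (Q → ℚ)))
          = (∑ a, f.1 a * x.1 a) + ∑ p, f.2 p * h p := by
        have := hψy (f, (0, 0))
        rw [e2] at this
        simp only [Pi.zero_apply, sub_zero] at this
        linarith [this]
      rw [e3] at hz
      exact hz
    · intro f hf
      obtain ⟨l, m, hrep⟩ := (hchar ((0, 0), f)).2 ⟨h0SP, by simpa using hf⟩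
      obtain ⟨z, hz⟩ := hφ'int l m
      rw [← hrep] at hz
      refine ⟨z, ?_⟩
      have e2 : φ₀ (((0, 0), f) : ((S → ℚ) × (P → ℚ)) × ((P → ℚ) × (Q → ℚ)))
          = ∑ q, f.2 q * x.2 q := by
        rw [hφ₀app]
        simp
      have e3 : φ' ((((0, 0), f)) : ((S → ℚ) × (P → ℚ)) × ((P → ℚ) × (Q → ℚ)))
          = (∑ q, f.2 q * x.2 q) + ∑ p, (0 - f.1 p) * h p := by
        have := hψy ((0, 0), f)
        rw [e2] at this
        simp only [Pi.zero_apply] at this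
        linarith [this]
      rw [e3] at hz
      have h5 : (∑ p, f.1 p * (-h) p) = ∑ p, (0 - f.1 p) * h p := by
        exact Finset.sum_congr rfl fun p _ => by
          simp only [Pi.neg_apply, zero_sub, neg_mul, mul_neg]
      rw [h5]
      linarith [hz]
  · rintro ⟨h, hA, hB⟩ f hf
    obtain ⟨k, hk1, hk2⟩ := hf
    obtain ⟨z1, e1⟩ := hA (f.1, k) hk1
    obtain ⟨z2, e2⟩ := hB (k, f.2) hk2
    refine ⟨z1 + z2, ?_⟩
    simp only at e1 e2
    have h6 : (∑ p, k p * (-h) p) = -∑ p, k p * h p := by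
      rw [← Finset.sum_neg_distrib]
      exact Finset.sum_congr rfl fun p _ => by simp
    rw [h6] at e2
    push_cast
    linarith [e1, e2]
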